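/- Let A ∈ M_n(ℂ) and let z ∈ F(A) be such that for every δ > 0 the set z + δ(F(A) − z) contains a relative neighborhood of z in F(A) (in particular this holds if z is an interior point of F(A)). Then for every unit vector x with x*Ax = z and every relatively open neighborhood U of x in the unit sphere, f_A(U) contains a relative neighborhood of z in F(A). -/

import Mathlib

open Matrix

/-- The field of values generating function `f_A(x) = x* A x`. -/
noncomputable def fA {m : Type*} [Fintype m] (A : Matrix m m ℂ) (x : m → ℂ) : ℂ :=
  star x ⬝ᵥ A.mulVec x

private def toE {n : ℕ} (w : Fin n → ℂ) : EuclideanSpace ℂ (Fin n) := WithLp.toLp 2 w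

private lemma toE_norm {n : ℕ} (w : Fin n → ℂ) :
    ‖toE w‖ = Real.sqrt (∑ i, ‖w i‖^2) := EuclideanSpace.norm_eq _

private lemma toE_coord {n : ℕ} (w : Fin n → ℂ) (i : Fin n) : ‖w i‖ ≤ ‖toE w‖ := by
  rw [toE_norm]
  calc ‖w i‖ = Real.sqrt (‖w i‖^2) := (Real.sqrt_sq (norm_nonneg _)).symm
  _ ≤ _ := Real.sqrt_le_sqrt (Finset.single_le_sum (fun j _ => sq_nonneg ‖w j‖) (Finset.mem_univ i))

private lemma toE_inner {n : ℕ} (x y : Fin n → ℂ) :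
    (inner ℂ (toE x) (toE y) : ℂ) = star x ⬝ᵥ y := by
  simp [toE, PiLp.inner_apply, dotProduct, RCLike.inner_apply, mul_comm]

private lemma toE_sub {n : ℕ} (x y : Fin n → ℂ) : toE (x - y) = toE x - toE y := rfl
private lemma toE_smul {n : ℕ} (c : ℂ) (x : Fin n → ℂ) : toE (c • x) = c • toE x := rfl

private lemma dot_expand {n : ℕ} (A : Matrix (Fin n) (Fin n) ℂ) (x y : Fin n → ℂ) (α β : ℂ) :
    star (α • x + β • y) ⬝ᵥ A.mulVec (α • x + β • y) =
      (starRingEnd ℂ) α * α * (star x ⬝ᵥ A.mulVec x)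
      + (starRingEnd ℂ) α * β * (star x ⬝ᵥ A.mulVec y)
      + (starRingEnd ℂ) β * α * (star y ⬝ᵥ A.mulVec x)
      + (starRingEnd ℂ) β * β * (star y ⬝ᵥ A.mulVec y) := by
  simp only [star_add, star_smul, add_dotProduct, dotProduct_add, smul_dotProduct,
    dotProduct_smul, mulVec_add, Matrix.mulVec_smul, smul_eq_mul, star_trivial,
    starRingEnd_apply, mul_assoc]
  ring_nf

private lemma dot_expand' {n : ℕ} (x y : Fin n → ℂ) (α β : ℂ) :
    star (α • x + β • y) ⬝ᵥ (α • x + β • y) =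
      (starRingEnd ℂ) α * α * (star x ⬝ᵥ x)
      + (starRingEnd ℂ) α * β * (star x ⬝ᵥ y)
      + (starRingEnd ℂ) β * α * (star y ⬝ᵥ x)
      + (starRingEnd ℂ) β * β * (star y ⬝ᵥ y) := by
  simp only [star_add, star_smul, add_dotProduct, dotProduct_add, smul_dotProduct,
    dotProduct_smul, smul_eq_mul, star_trivial, starRingEnd_apply, mul_assoc]
  ring_nf

private lemma star_dot_self {n : ℕ} (w : Fin n → ℂ) :
    star w ⬝ᵥ w = ((∑ i, ‖w i‖^2 : ℝ) : ℂ) := by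
  push_cast
  simp [dotProduct, Complex.conj_mul', Complex.sq_norm]

private lemma dot_conj {n : ℕ} (x y : Fin n → ℂ) :
    star y ⬝ᵥ x = (starRingEnd ℂ) (star x ⬝ᵥ y) := by
  simp [dotProduct, map_sum, mul_comm]


private lemma choose_phase (a b : ℂ) : ∃ ω : ℂ, ‖ω‖ = 1 ∧ ∃ β : ℝ, 0 ≤ β ∧
    ω * a + (starRingEnd ℂ) ω * b = ((β : ℝ) : ℂ) := by
  have him : ∀ ωx : ℂ, (ωx * a + (starRingEnd ℂ) ωx * b).im
      = (ωx * (a - (starRingEnd ℂ) b)).im := by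
    intro ωx
    simp only [Complex.add_im, Complex.mul_im, Complex.sub_re, Complex.sub_im,
      Complex.conj_re, Complex.conj_im]
    ring
  set d : ℂ := a - (starRingEnd ℂ) b with hd
  set ω₀ : ℂ := if d = 0 then 1 else (‖d‖ : ℂ)⁻¹ * (starRingEnd ℂ) d with hω₀
  have hω₀n : ‖ω₀‖ = 1 := by
    by_cases h : d = 0
    · simp [hω₀, h]
    · simp only [hω₀, if_neg h]
      rw [norm_mul, norm_inv, RCLike.norm_conj, Complex.norm_real]
      rw [Real.norm_eq_abs, abs_of_nonneg (norm_nonneg d)]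
      exact inv_mul_cancel₀ (norm_ne_zero_iff.2 h)
  have him0 : (ω₀ * d).im = 0 := by
    by_cases h : d = 0
    · simp [h]
    · simp only [hω₀, if_neg h, mul_assoc, Complex.conj_mul']
      rw [← Complex.ofReal_pow, ← Complex.ofReal_inv, ← Complex.ofReal_mul]
      exact Complex.ofReal_im _
  set r₀ : ℝ := (ω₀ * a + (starRingEnd ℂ) ω₀ * b).re with hr₀
  by_cases hsgn : 0 ≤ r₀
  · refine ⟨ω₀, hω₀n, r₀, hsgn, ?_⟩
    apply Complex.ext
    · simp [hr₀]
    · rw [him ω₀]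
      have := him0
      simp only [← hd, Complex.mul_im, Complex.ofReal_im] at this ⊢
      linarith
  · refine ⟨-ω₀, by simpa using hω₀n, -r₀, by linarith, ?_⟩
    apply Complex.ext
    · simp only [map_neg, neg_mul, Complex.ofReal_neg]
      rw [show -(ω₀ * a) + -((starRingEnd ℂ) ω₀ * b) = -(ω₀ * a + (starRingEnd ℂ) ω₀ * b) by ring]
      simp [hr₀]
    · simp only [map_neg, neg_mul, Complex.ofReal_neg]
      rw [show -(ω₀ * a) + -((starRingEnd ℂ) ω₀ * b) = -(ω₀ * a + (starRingEnd ℂ) ω₀ * b) by ring]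
      rw [Complex.neg_im, him ω₀]
      have := him0
      simp only [← hd, Complex.mul_im, Complex.neg_im, Complex.ofReal_im] at this ⊢
      linarith

private lemma dot_smul_self {n : ℕ} (c : ℂ) (w : Fin n → ℂ) :
    star (c • w) ⬝ᵥ (c • w) = (starRingEnd ℂ) c * c * (star w ⬝ᵥ w) := by
  simp only [star_smul, smul_dotProduct, dotProduct_smul, smul_eq_mul, starRingEnd_apply]
  ring

private lemma fA_smul {n : ℕ} (A : Matrix (Fin n) (Fin n) ℂ) (c : ℂ) (w : Fin n → ℂ) :
    star (c • w) ⬝ᵥ A.mulVec (c • w) = (starRingEnd ℂ) c * c * (star w ⬝ᵥ A.mulVec w) := by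
  simp only [star_smul, smul_dotProduct, Matrix.mulVec_smul, dotProduct_smul, smul_eq_mul,
    starRingEnd_apply]
  ring


set_option maxHeartbeats 1000000 in
private lemma key_point {n : ℕ} (A : Matrix (Fin n) (Fin n) ℂ) (x y : Fin n → ℂ)
    (z u : ℂ) (hx : star x ⬝ᵥ x = 1) (hy : star y ⬝ᵥ y = 1)
    (hfx : fA A x = z) (hfy : fA A y = u) (hne : u ≠ z)
    (δ : ℝ) (hδ : 0 < δ) (hδ1 : δ ≤ 1/100) :
    ∃ v : Fin n → ℂ, star v ⬝ᵥ v = 1 ∧ fA A v = z + (δ : ℂ) * (u - z) ∧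
      ∀ i, ‖v i - x i‖ ≤ 4 * Real.sqrt δ := by
  have hfx' : star x ⬝ᵥ A.mulVec x = z := hfx
  have hfy' : star y ⬝ᵥ A.mulVec y = u := hfy
  set s : ℂ := star x ⬝ᵥ y with hs_def
  set P : ℂ := star x ⬝ᵥ A.mulVec y with hP_def
  set Q : ℂ := star y ⬝ᵥ A.mulVec x with hQ_def
  have hc0 : u - z ≠ 0 := sub_ne_zero.2 hne
  set a : ℂ := (P - z * s) / (u - z) with ha_def
  set b : ℂ := (Q - z * (starRingEnd ℂ) s) / (u - z) with hb_def
  have hPz : P - z * s = (u - z) * a := by rw [ha_def]; field_simp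
  have hQz : Q - z * (starRingEnd ℂ) s = (u - z) * b := by rw [hb_def]; field_simp
  obtain ⟨ω, hωn, β, hβ, hωab⟩ := choose_phase a b
  have hωω : (starRingEnd ℂ) ω * ω = 1 := by
    rw [Complex.conj_mul', hωn]
    norm_num
  -- Cauchy-Schwarz: ‖s‖ ≤ 1
  have hsumx : (∑ i, ‖x i‖^2 : ℝ) = 1 := by
    have h1 := star_dot_self x
    rw [hx] at h1
    exact_mod_cast h1.symm
  have hsumy : (∑ i, ‖y i‖^2 : ℝ) = 1 := by
    have h1 := star_dot_self y
    rw [hy] at h1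
    exact_mod_cast h1.symm
  have hxEn : ‖toE x‖ = 1 := by rw [toE_norm, hsumx, Real.sqrt_one]
  have hyEn : ‖toE y‖ = 1 := by rw [toE_norm, hsumy, Real.sqrt_one]
  have hsn : ‖s‖ ≤ 1 := by
    rw [hs_def, ← toE_inner]
    calc ‖(inner ℂ (toE x) (toE y) : ℂ)‖ ≤ ‖toE x‖ * ‖toE y‖ := norm_inner_le_norm _ _
    _ = 1 := by rw [hxEn, hyEn]; norm_num
  set re1 : ℝ := (ω * s).re with hre1_def
  have hre1 : |re1| ≤ 1 := by
    calc |re1| ≤ ‖ω * s‖ := Complex.abs_re_le_norm _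
    _ = ‖ω‖ * ‖s‖ := by rw [norm_mul]
    _ ≤ 1 := by rw [hωn]; simpa using hsn
  have hre1a : -1 ≤ re1 := by cases' abs_le.1 hre1 with h _; linarith
  have hre1b : re1 ≤ 1 := by cases' abs_le.1 hre1 with _ h; linarith
  -- the real path functions
  set Nr : ℝ → ℝ := fun t => (1-t)^2 + t^2 + 2*(t*(1-t))*re1 with hNr_def
  set φ : ℝ → ℝ := fun t => t^2 + t*(1-t)*β - δ * Nr t with hφ_def
  have hφc : Continuous φ := by
    simp only [hφ_def, hNr_def]
    fun_prop
  set t₁ : ℝ := Real.sqrt δ with ht₁_def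
  have ht₁0 : 0 ≤ t₁ := Real.sqrt_nonneg δ
  have ht₁sq : t₁^2 = δ := Real.sq_sqrt hδ.le
  have ht₁le : t₁ ≤ 1/10 := by
    rw [ht₁_def, show (1:ℝ)/10 = Real.sqrt ((1/10)^2) from (Real.sqrt_sq (by norm_num)).symm]
    exact Real.sqrt_le_sqrt (by linarith)
  have hφ0 : φ 0 = -δ := by simp [hφ_def, hNr_def]
  have hφt₁ : 0 ≤ φ t₁ := by
    have e1 : 0 ≤ t₁*(1-t₁) := by nlinarith
    have h1 : 0 ≤ 1 - re1 := by linarith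
    simp only [hφ_def, hNr_def]
    nlinarith [mul_nonneg (mul_nonneg hδ.le e1) h1, mul_nonneg e1 hβ]
  obtain ⟨t', ht'mem, hφt'⟩ := intermediate_value_Icc ht₁0 hφc.continuousOn
    (show (0:ℝ) ∈ Set.Icc (φ 0) (φ t₁) by rw [hφ0]; exact ⟨by linarith, hφt₁⟩)
  obtain ⟨ht'0, ht't₁⟩ := ht'mem
  have ht'le : t' ≤ 1/10 := le_trans ht't₁ ht₁le
  have hNrval : Nr t' = (1-t')^2 + t'^2 + 2*(t'*(1-t'))*re1 := by simp [hNr_def]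
  have hNrlb : (16/25 : ℝ) ≤ Nr t' := by
    rw [hNrval]
    have h2 : 0 ≤ t' * (1 - t') := by nlinarith
    nlinarith [mul_nonneg h2 (by linarith : (0:ℝ) ≤ 1 + re1)]
  have hNrpos : 0 < Nr t' := by linarith
  have hreal : t'^2 + t'*(1-t')*β = δ * Nr t' := by
    have h3 : φ t' = t'^2 + t'*(1-t')*β - δ * Nr t' := by simp [hφ_def]
    rw [h3] at hφt'
    linarith
  -- the path vector
  set ρ : ℝ := Real.sqrt (Nr t') with hρ_def
  have hρpos : 0 < ρ := Real.sqrt_pos.2 hNrpos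
  have hρsq : ρ^2 = Nr t' := Real.sq_sqrt hNrpos.le
  set αc : ℂ := ((1 - t' : ℝ) : ℂ) with hαc_def
  set βc : ℂ := ((t' : ℝ) : ℂ) * ω with hβc_def
  set v : Fin n → ℂ := αc • x + βc • y with hv_def
  have hadd : ω * s + (starRingEnd ℂ) ω * (starRingEnd ℂ) s = 2 * ((re1 : ℝ) : ℂ) := by
    rw [← _root_.map_mul, Complex.add_conj]
    try rw [hre1_def]
    try push_cast
    try ring
  have hN : star v ⬝ᵥ v = ((Nr t' : ℝ) : ℂ) := by
    rw [hv_def, dot_expand', hx, hy, dot_conj x y, ← hs_def, hNrval]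
    simp only [hαc_def, hβc_def, _root_.map_mul, Complex.conj_ofReal]
    push_cast
    linear_combination ((t' : ℂ) * (1 - (t' : ℂ))) * hadd + (t' : ℂ)^2 * hωω
  have hkey : fA A v = z * ((Nr t' : ℝ) : ℂ) + (u - z) * ((δ * Nr t' : ℝ) : ℂ) := by
    have h4 : fA A v = star v ⬝ᵥ A.mulVec v := rfl
    rw [h4, hv_def, dot_expand, hfx', hfy', ← hP_def, ← hQ_def]
    have h5 : ((δ * Nr t' : ℝ) : ℂ) = ((t'^2 + t'*(1-t')*β : ℝ) : ℂ) := by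
      rw [hreal]
    rw [h5, hNrval]
    simp only [hαc_def, hβc_def, _root_.map_mul, Complex.conj_ofReal]
    push_cast
    linear_combination ((t' : ℂ) * (1 - (t' : ℂ)) * ω) * hPz
      + ((t' : ℂ) * (1 - (t' : ℂ)) * ((starRingEnd ℂ) ω)) * hQz
      + ((t' : ℂ) * (1 - (t' : ℂ)) * (u - z)) * hωab
      + ((t' : ℂ)^2 * u) * hωω
      + ((t' : ℂ) * (1 - (t' : ℂ)) * z) * hadd
  -- normalize
  set ζ : ℂ := ((ρ⁻¹ : ℝ) : ℂ) with hζ_def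
  set v₁ : Fin n → ℂ := ζ • v with hv₁_def
  have hζconj : (starRingEnd ℂ) ζ = ζ := Complex.conj_ofReal _
  have hinv : (ρ⁻¹)^2 * Nr t' = 1 := by
    rw [← hρsq]
    field_simp
  have hinvC : ((ρ⁻¹ : ℝ) : ℂ) * ((ρ⁻¹ : ℝ) : ℂ) * ((Nr t' : ℝ) : ℂ) = 1 := by
    have h6 := congrArg (fun r : ℝ => (r : ℂ)) hinv
    push_cast at h6 ⊢
    linear_combination h6
  have hsmul : star v₁ ⬝ᵥ v₁ = (starRingEnd ℂ) ζ * ζ * (star v ⬝ᵥ v) := by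
    rw [hv₁_def]; exact dot_smul_self ζ v
  have hunit : star v₁ ⬝ᵥ v₁ = 1 := by
    rw [hsmul, hζconj, hN, hζ_def]
    exact hinvC
  have hfsmul : fA A v₁ = (starRingEnd ℂ) ζ * ζ * fA A v := by
    have h7 : fA A v₁ = star v₁ ⬝ᵥ A.mulVec v₁ := rfl
    have h8 : fA A v = star v ⬝ᵥ A.mulVec v := rfl
    rw [h7, h8, hv₁_def]
    exact fA_smul A ζ v
  have hval : fA A v₁ = z + (δ : ℂ) * (u - z) := by
    rw [hfsmul, hζconj, hkey, hζ_def]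
    have h9 := hinvC
    push_cast at h9 ⊢
    linear_combination (z + (δ : ℂ) * (u - z)) * h9
  -- distance estimates
  have hvsub : v - x = ((t' : ℝ) : ℂ) • (ω • y - x) := by
    rw [hv_def, hαc_def, hβc_def]
    funext i
    simp only [Pi.sub_apply, Pi.add_apply, Pi.smul_apply, smul_eq_mul]
    push_cast
    ring
  have hωyE : ‖ω • toE y‖ = 1 := by
    rw [norm_smul, hyEn, hωn]
    norm_num
  have h2t : ‖toE v - toE x‖ ≤ 2 * t' := by
    rw [← toE_sub, hvsub, toE_smul, norm_smul]
    have h10 : toE (ω • y - x) = ω • toE y - toE x := rfl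
    have h11 : ‖toE (ω • y - x)‖ ≤ 2 := by
      rw [h10]
      calc ‖ω • toE y - toE x‖ ≤ ‖ω • toE y‖ + ‖toE x‖ := norm_sub_le _ _
      _ = 2 := by rw [hωyE, hxEn]; norm_num
    have h12 : ‖((t' : ℝ) : ℂ)‖ = t' := by
      rw [Complex.norm_real, Real.norm_eq_abs, abs_of_nonneg ht'0]
    rw [h12]
    calc t' * ‖toE (ω • y - x)‖ ≤ t' * 2 := by
          exact mul_le_mul_of_nonneg_left h11 ht'0
    _ = 2 * t' := by ring
  have hvEnorm : ‖toE v‖ = ρ := by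
    rw [toE_norm, hρ_def]
    congr 1
    have h13 := star_dot_self v
    rw [hN] at h13
    exact_mod_cast h13.symm
  have hρclose : |1 - ρ| ≤ 2 * t' := by
    have h14 := abs_norm_sub_norm_le (toE x) (toE v)
    rw [hxEn, hvEnorm, norm_sub_rev] at h14
    exact le_trans h14 h2t
  have hv₁v : ‖toE v₁ - toE v‖ = |1 - ρ| := by
    have h15 : toE v₁ - toE v = (ζ - 1) • toE v := by
      rw [hv₁_def, toE_smul, sub_smul, one_smul]
    rw [h15, norm_smul, hvEnorm]
    have h16 : ‖ζ - 1‖ = |ρ⁻¹ - 1| := by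
      rw [hζ_def, show ((ρ⁻¹ : ℝ) : ℂ) - 1 = ((ρ⁻¹ - 1 : ℝ) : ℂ) by push_cast; ring,
        Complex.norm_real, Real.norm_eq_abs]
    have haux : (1:ℝ) - ρ = (ρ⁻¹ - 1) * ρ := by field_simp
    rw [h16, haux, abs_mul, abs_of_pos hρpos]
  have htotal : ‖toE v₁ - toE x‖ ≤ 4 * t' := by
    calc ‖toE v₁ - toE x‖ ≤ ‖toE v₁ - toE v‖ + ‖toE v - toE x‖ := norm_sub_le_norm_sub_add_norm_sub _ _ _
    _ ≤ |1 - ρ| + 2 * t' := by rw [hv₁v]; linarith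
    _ ≤ 4 * t' := by linarith
  refine ⟨v₁, hunit, hval, fun i => ?_⟩
  have h17 : ‖v₁ i - x i‖ ≤ ‖toE v₁ - toE x‖ := by
    have := toE_coord (v₁ - x) i
    rwa [toE_sub] at this
  have h18 : 4 * t' ≤ 4 * Real.sqrt δ := by
    rw [← ht₁_def]
    linarith
  linarith

/-- The numerical range (field of values) of `A`. -/
def NR {m : Type*} [Fintype m] (A : Matrix m m ℂ) : Set ℂ :=
  {z | ∃ x, star x ⬝ᵥ x = 1 ∧ fA A x = z}

/-- Euclidean norm on `m → ℂ`. -/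
noncomputable def enorm {m : Type*} [Fintype m] (x : m → ℂ) : ℝ :=
  Real.sqrt (∑ i, ‖x i‖ ^ 2)

/-- Projective distance: infimum of `‖x - ω • y‖` over unimodular `ω`. -/
noncomputable def projDist {m : Type*} [Fintype m] (x y : m → ℂ) : ℝ :=
  sInf {d | ∃ ω : ℂ, ‖ω‖ = 1 ∧ d = _root_.enorm (x - ω • y)}

theorem openness_of_fA_at_scaling_points
    {n : ℕ} (A : Matrix (Fin n) (Fin n) ℂ) (z : ℂ) (hz : z ∈ NR A)
    (hscale : ∀ δ : ℝ, 0 < δ → ∃ V : Set ℂ, IsOpen V ∧ z ∈ V ∧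
      V ∩ NR A ⊆ {w | ∃ u ∈ NR A, w = z + (δ : ℂ) * (u - z)}) :
    ∀ x : Fin n → ℂ, star x ⬝ᵥ x = 1 → fA A x = z →
    ∀ U : Set (Fin n → ℂ), x ∈ U →
      (∃ V : Set (Fin n → ℂ), IsOpen V ∧ U = V ∩ {y | star y ⬝ᵥ y = 1}) →
      ∃ W : Set ℂ, IsOpen W ∧ z ∈ W ∧ W ∩ NR A ⊆ fA A '' U := by
  intro x hx hfx U hxU hU
  obtain ⟨V, hVo, hUeq⟩ := hU
  have hxV : x ∈ V := by rw [hUeq] at hxU; exact hxU.1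
  obtain ⟨ε, hε, hball⟩ := Metric.isOpen_iff.1 hVo x hxV
  set δ : ℝ := min (ε^2/100) (1/100) with hδdef
  have hδpos : 0 < δ := lt_min (by positivity) (by norm_num)
  have hδ1 : δ ≤ 1/100 := min_le_right _ _
  have hδε : δ ≤ ε^2/100 := min_le_left _ _
  obtain ⟨V₀, hV₀o, hzV₀, hV₀sub⟩ := hscale δ hδpos
  refine ⟨V₀, hV₀o, hzV₀, ?_⟩
  rintro w ⟨hwV₀, hwNR⟩
  obtain ⟨u, huNR, hw⟩ := hV₀sub ⟨hwV₀, hwNR⟩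
  by_cases huz : u = z
  · refine ⟨x, hxU, ?_⟩
    rw [hfx, hw, huz]
    ring
  · obtain ⟨y, hy, hfy⟩ := huNR
    obtain ⟨v, hv1, hv2, hv3⟩ := key_point A x y z u hx hy hfx hfy huz δ hδpos hδ1
    refine ⟨v, ?_, by rw [hv2]; exact hw.symm⟩
    rw [hUeq]
    refine ⟨hball ?_, hv1⟩
    rw [Metric.mem_ball]
    have hsq : Real.sqrt δ ≤ ε/10 := by
      calc Real.sqrt δ ≤ Real.sqrt (ε^2/100) := Real.sqrt_le_sqrt hδε
      _ = ε/10 := by rw [show ε^2/100 = (ε/10)^2 by ring, Real.sqrt_sq (by positivity)]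
    have hlt : 4 * Real.sqrt δ < ε := by nlinarith [Real.sqrt_nonneg δ]
    rw [dist_pi_lt_iff hε]
    intro i
    rw [dist_eq_norm]
    exact lt_of_le_of_lt (hv3 i) hlt
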